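/- The extended dihedral angle functions α_ij : ℝ⁶ → [0,π] are continuous on ℝ⁶; they satisfy α_ij(l) = α_kh(l) for every partition {i,j,k,h} = {1,2,3,4} into opposite edges, and for each vertex index i ∈ {1,2,3,4} the three angles at edges through vᵢ sum to π: α_ij(l) + α_ik(l) + α_ih(l) = π for all l ∈ ℝ⁶. -/
import Mathlib


noncomputable section

open Real Set Filter

/-- The generalized Euclidean triangle angle `aᵢ(x)` opposite the side of length `x i`,
for a generalized triangle with (positive) side lengths `x 0, x 1, x 2`:
it is `π` if `x i ≥ x j + x k`, `0` if some other side is at least the sum of the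
remaining two, and otherwise the usual Euclidean angle `arccos((xⱼ²+x_k²−xᵢ²)/(2xⱼx_k))`. -/
noncomputable def genAngle (x : Fin 3 → ℝ) (i : Fin 3) : ℝ :=
  if x (i + 1) + x (i + 2) ≤ x i then Real.pi
  else if x i + x (i + 2) ≤ x (i + 1) ∨ x i + x (i + 1) ≤ x (i + 2) then 0
  else Real.arccos
    ((x (i + 1) ^ 2 + x (i + 2) ^ 2 - x i ^ 2) / (2 * x (i + 1) * x (i + 2)))

/-- The three side lengths `e^{(l₁₂+l₃₄)/2}, e^{(l₁₃+l₂₄)/2}, e^{(l₁₄+l₂₃)/2}` of the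
generalized Euclidean triangle associated to a length vector `l ∈ ℝ⁶`.
Edge indices: `0 ↔ {1,2}, 1 ↔ {1,3}, 2 ↔ {1,4}, 3 ↔ {2,3}, 4 ↔ {2,4}, 5 ↔ {3,4}`,
so opposite pairs of edges are `(0,5), (1,4), (2,3)`. -/
noncomputable def triSides (l : Fin 6 → ℝ) (k : Fin 3) : ℝ :=
  if k.val = 0 then Real.exp ((l 0 + l 5) / 2)
  else if k.val = 1 then Real.exp ((l 1 + l 4) / 2)
  else Real.exp ((l 2 + l 3) / 2)

/-- The quad (pair of opposite edges) containing the edge `p`. -/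
def quadIndex (p : Fin 6) : Fin 3 :=
  if p.val = 0 ∨ p.val = 5 then 0 else if p.val = 1 ∨ p.val = 4 then 1 else 2

/-- The extended dihedral angle `α_p(l)` of the generalized decorated tetrahedron with
length vector `l ∈ ℝ⁶` at the edge `p`. -/
noncomputable def dihedral (l : Fin 6 → ℝ) (p : Fin 6) : ℝ :=
  genAngle (triSides l) (quadIndex p)

/-- The edge index in `Fin 6` of the edge `{i,j}` of the tetrahedron on vertices `Fin 4`
(junk value for `i = j`). -/
def edgeOf (i j : Fin 4) : Fin 6 :=
  if (i.val = 0 ∧ j.val = 1) ∨ (i.val = 1 ∧ j.val = 0) then 0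
  else if (i.val = 0 ∧ j.val = 2) ∨ (i.val = 2 ∧ j.val = 0) then 1
  else if (i.val = 0 ∧ j.val = 3) ∨ (i.val = 3 ∧ j.val = 0) then 2
  else if (i.val = 1 ∧ j.val = 2) ∨ (i.val = 2 ∧ j.val = 1) then 3
  else if (i.val = 1 ∧ j.val = 3) ∨ (i.val = 3 ∧ j.val = 1) then 4
  else 5

/-- The two endpoints of the edge `p` of the tetrahedron. -/
def endPts (p : Fin 6) : Fin 4 × Fin 4 :=
  if p.val = 0 then (0, 1) else if p.val = 1 then (0, 2) else if p.val = 2 then (0, 3)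
  else if p.val = 3 then (1, 2) else if p.val = 4 then (1, 3) else (2, 3)

/-- The Lobachevsky function `Λ(x) = −∫₀ˣ ln|2 sin t| dt`. -/
noncomputable def lob (x : ℝ) : ℝ := -∫ t in (0:ℝ)..x, Real.log |2 * Real.sin t|

/-- The volume of the generalized decorated tetrahedron with length vector `l`. -/
noncomputable def vol6 (l : Fin 6 → ℝ) : ℝ := (1 / 2 : ℝ) * ∑ p : Fin 6, lob (dihedral l p)

/-- The co-volume function `cov(l) = 2 vol(l) + Σ α_p(l) l_p` on `ℝ⁶`. -/
noncomputable def cov6 (l : Fin 6 → ℝ) : ℝ := 2 * vol6 l + ∑ p : Fin 6, dihedral l p * l p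

/-- `𝓛 ⊂ ℝ⁶`: length vectors of genuine decorated ideal hyperbolic tetrahedra, i.e. those
whose associated generalized Euclidean triangle satisfies the strict triangle inequalities. -/
def Ldom : Set (Fin 6 → ℝ) :=
  {l | ∀ i : Fin 3, triSides l i < triSides l (i + 1) + triSides l (i + 2)}

/-- The action of `w ∈ ℝ⁴` on `l ∈ ℝ⁶`: `(w + l)_{ij} = l_{ij} + wᵢ + wⱼ`. -/
def act (w : Fin 4 → ℝ) (l : Fin 6 → ℝ) : Fin 6 → ℝ :=
  fun p => l p + w (endPts p).1 + w (endPts p).2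

/-- `ℝ̂⁴ = {w + 0 : w ∈ ℝ⁴} ⊂ ℝ⁶`. -/
def hatR4 : Set (Fin 6 → ℝ) := {x | ∃ w : Fin 4 → ℝ, x = act w 0}

/-- `i, j, k, h` are pairwise distinct, i.e. `{i,j,k,h} = {1,2,3,4}`. -/
def Distinct4 (i j k h : Fin 4) : Prop :=
  i ≠ j ∧ i ≠ k ∧ i ≠ h ∧ j ≠ k ∧ j ≠ h ∧ k ≠ h

instance instDecDistinct4 (i j k h : Fin 4) : Decidable (Distinct4 i j k h) := by
  unfold Distinct4; infer_instance

lemma triSides_pos (l : Fin 6 → ℝ) (k : Fin 3) : 0 < triSides l k := by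
  unfold triSides; split_ifs <;> exact Real.exp_pos _

/-- For positive side lengths, the generalized angle is always given by the
(clamped) arccos formula. -/
lemma genAngle_eq_arccos (x : Fin 3 → ℝ) (hx : ∀ i, 0 < x i) (i : Fin 3) :
    genAngle x i = Real.arccos
      ((x (i + 1) ^ 2 + x (i + 2) ^ 2 - x i ^ 2) / (2 * x (i + 1) * x (i + 2))) := by
  have h0 := hx i; have h1 := hx (i + 1); have h2 := hx (i + 2)
  have hd : 0 < 2 * x (i + 1) * x (i + 2) := by positivity
  unfold genAngle
  split_ifs with hA hB
  · rw [eq_comm, Real.arccos_eq_pi, div_le_iff₀ hd]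
    nlinarith
  · rw [eq_comm, Real.arccos_eq_zero, le_div_iff₀ hd]
    rcases hB with hB | hB <;> nlinarith
  · rfl

lemma arccos_sum_aux (A B C : ℝ) (hA1 : -1 ≤ A) (hA2 : A < 1) (hB1 : -1 ≤ B) (hB2 : B ≤ 1)
    (hAB : -B < A) (hCAB : 0 ≤ C + A * B)
    (hid : (1 - A ^ 2) * (1 - B ^ 2) = (C + A * B) ^ 2) :
    Real.arccos A + Real.arccos B + Real.arccos C = Real.pi := by
  have hcosC : C = Real.cos (Real.pi - (Real.arccos A + Real.arccos B)) := by
    rw [Real.cos_pi_sub, Real.cos_add, Real.sin_arccos, Real.sin_arccos,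
      Real.cos_arccos hA1 hA2.le, Real.cos_arccos hB1 hB2]
    have hs : Real.sqrt (1 - A ^ 2) * Real.sqrt (1 - B ^ 2)
        = Real.sqrt ((1 - A ^ 2) * (1 - B ^ 2)) := by
      rw [Real.sqrt_mul (by nlinarith)]
    rw [hs, hid, Real.sqrt_sq hCAB]
    ring
  have hAB_pos : 0 < Real.arccos A := Real.arccos_pos.mpr hA2
  have hsum_lt : Real.arccos A + Real.arccos B < Real.pi := by
    have h : Real.arccos A < Real.arccos (-B) := by
      apply Real.strictAntiOn_arccos _ _ hAB
      · constructor <;> linarith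
      · constructor <;> linarith
    rw [Real.arccos_neg] at h
    linarith
  have hBn := Real.arccos_nonneg B
  have heq : Real.arccos C = Real.pi - (Real.arccos A + Real.arccos B) := by
    rw [hcosC, Real.arccos_cos (by linarith) (by linarith)]
  rw [heq]; ring

/-- The sum of arccos angles of a genuine Euclidean triangle is `π`. -/
lemma arccos_triangle_sum {a b c : ℝ} (ha : 0 < a) (hb : 0 < b) (hc : 0 < c)
    (h1 : a < b + c) (h2 : b < a + c) (h3 : c < a + b) :
    Real.arccos ((b ^ 2 + c ^ 2 - a ^ 2) / (2 * b * c))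
      + Real.arccos ((c ^ 2 + a ^ 2 - b ^ 2) / (2 * c * a))
      + Real.arccos ((a ^ 2 + b ^ 2 - c ^ 2) / (2 * a * b)) = Real.pi := by
  have hbc : (0:ℝ) < 2 * b * c := by positivity
  have hca : (0:ℝ) < 2 * c * a := by positivity
  have ha' : a ≠ 0 := ha.ne'
  have hb' : b ≠ 0 := hb.ne'
  have hc' : c ≠ 0 := hc.ne'
  apply arccos_sum_aux
  · rw [le_div_iff₀ hbc]; nlinarith
  · rw [div_lt_iff₀ hbc]; nlinarith
  · rw [le_div_iff₀ hca]; nlinarith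
  · rw [div_le_iff₀ hca]; nlinarith
  · rw [← neg_div, div_lt_div_iff₀ hca hbc]
    nlinarith [mul_pos (mul_pos hc (add_pos ha hb))
      (show (0:ℝ) < c ^ 2 - (a - b) ^ 2 by nlinarith)]
  · have h : (a ^ 2 + b ^ 2 - c ^ 2) / (2 * a * b)
        + (b ^ 2 + c ^ 2 - a ^ 2) / (2 * b * c) * ((c ^ 2 + a ^ 2 - b ^ 2) / (2 * c * a))
        = (((a + b) ^ 2 - c ^ 2) * (c ^ 2 - (a - b) ^ 2)) / (4 * a * b * c ^ 2) := by
      field_simp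
      ring
    rw [h]
    have hnum : 0 ≤ ((a + b) ^ 2 - c ^ 2) * (c ^ 2 - (a - b) ^ 2) := by
      apply le_of_lt; apply mul_pos <;> nlinarith
    positivity
  · field_simp
    ring

lemma genAngle_pi (x : Fin 3 → ℝ) (i : Fin 3) (h : x (i + 1) + x (i + 2) ≤ x i) :
    genAngle x i = Real.pi := by unfold genAngle; rw [if_pos h]

lemma genAngle_zero (x : Fin 3 → ℝ) (i : Fin 3) (h1 : ¬ (x (i + 1) + x (i + 2) ≤ x i))
    (h2 : x i + x (i + 2) ≤ x (i + 1) ∨ x i + x (i + 1) ≤ x (i + 2)) :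
    genAngle x i = 0 := by unfold genAngle; rw [if_neg h1, if_pos h2]

/-- The three generalized angles of a positive triple sum to `π`. -/
lemma genAngle_sum (x : Fin 3 → ℝ) (hx : ∀ i, 0 < x i) :
    genAngle x 0 + genAngle x 1 + genAngle x 2 = Real.pi := by
  have h0 := hx 0; have h1 := hx 1; have h2 := hx 2
  by_cases ht : x 0 < x 1 + x 2 ∧ x 1 < x 2 + x 0 ∧ x 2 < x 0 + x 1
  · obtain ⟨t0, t1, t2⟩ := ht
    rw [genAngle_eq_arccos x hx 0, genAngle_eq_arccos x hx 1, genAngle_eq_arccos x hx 2]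
    show Real.arccos ((x 1 ^ 2 + x 2 ^ 2 - x 0 ^ 2) / (2 * x 1 * x 2))
        + Real.arccos ((x 2 ^ 2 + x 0 ^ 2 - x 1 ^ 2) / (2 * x 2 * x 0))
        + Real.arccos ((x 0 ^ 2 + x 1 ^ 2 - x 2 ^ 2) / (2 * x 0 * x 1)) = Real.pi
    exact arccos_triangle_sum h0 h1 h2 t0 (by linarith) (by linarith)
  · rcases le_or_gt (x 1 + x 2) (x 0) with hd | hn0
    · have g0 : genAngle x 0 = Real.pi := genAngle_pi x 0 hd
      have g1 : genAngle x 1 = 0 :=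
        genAngle_zero x 1 (not_le.mpr (by show x 1 < x 2 + x 0; linarith))
          (Or.inr (by show x 1 + x 2 ≤ x 0; linarith))
      have g2 : genAngle x 2 = 0 :=
        genAngle_zero x 2 (not_le.mpr (by show x 2 < x 0 + x 1; linarith))
          (Or.inl (by show x 2 + x 1 ≤ x 0; linarith))
      rw [g0, g1, g2]; ring
    rcases le_or_gt (x 2 + x 0) (x 1) with hd | hn1
    · have g1 : genAngle x 1 = Real.pi := genAngle_pi x 1 hd
      have g0 : genAngle x 0 = 0 :=
        genAngle_zero x 0 (not_le.mpr (by show x 0 < x 1 + x 2; linarith))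
          (Or.inl (by show x 0 + x 2 ≤ x 1; linarith))
      have g2 : genAngle x 2 = 0 :=
        genAngle_zero x 2 (not_le.mpr (by show x 2 < x 0 + x 1; linarith))
          (Or.inr (by show x 2 + x 0 ≤ x 1; linarith))
      rw [g0, g1, g2]; ring
    rcases le_or_gt (x 0 + x 1) (x 2) with hd | hn2
    · have g2 : genAngle x 2 = Real.pi := genAngle_pi x 2 hd
      have g0 : genAngle x 0 = 0 :=
        genAngle_zero x 0 (not_le.mpr (by show x 0 < x 1 + x 2; linarith))
          (Or.inr (by show x 0 + x 1 ≤ x 2; linarith))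
      have g1 : genAngle x 1 = 0 :=
        genAngle_zero x 1 (not_le.mpr (by show x 1 < x 2 + x 0; linarith))
          (Or.inl (by show x 1 + x 0 ≤ x 2; linarith))
      rw [g0, g1, g2]; ring
    · exact absurd ⟨hn0, hn1, hn2⟩ ht

lemma triSides_continuous (k : Fin 3) : Continuous fun l : Fin 6 → ℝ => triSides l k := by
  unfold triSides
  split_ifs <;> fun_prop

lemma dihedral_continuous (p : Fin 6) : Continuous fun l : Fin 6 → ℝ => dihedral l p := by
  have heq : (fun l : Fin 6 → ℝ => dihedral l p)
      = fun l => Real.arccos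
        ((triSides l (quadIndex p + 1) ^ 2 + triSides l (quadIndex p + 2) ^ 2
            - triSides l (quadIndex p) ^ 2)
          / (2 * triSides l (quadIndex p + 1) * triSides l (quadIndex p + 2))) := by
    funext l
    exact genAngle_eq_arccos (triSides l) (triSides_pos l) (quadIndex p)
  rw [heq]
  apply Real.continuous_arccos.comp
  apply Continuous.div
  · have := triSides_continuous (quadIndex p + 1)
    have := triSides_continuous (quadIndex p + 2)
    have := triSides_continuous (quadIndex p)
    fun_prop
  · have := triSides_continuous (quadIndex p + 1)
    have := triSides_continuous (quadIndex p + 2)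
    fun_prop
  · intro l
    have := triSides_pos l (quadIndex p + 1)
    have := triSides_pos l (quadIndex p + 2)
    positivity

lemma sum3_perm (f : Fin 3 → ℝ) (a b c : Fin 3) (hab : a ≠ b) (hac : a ≠ c) (hbc : b ≠ c) :
    f a + f b + f c = f 0 + f 1 + f 2 := by
  fin_cases a <;> fin_cases b <;> fin_cases c <;> simp_all <;> ring

/-- the extended dihedral angles are continuous on `ℝ⁶`, take values in
`[0,π]`, agree on opposite edges, and sum to `π` over the three edges at each vertex. -/
theorem dihedral_continuous_opposite_vertexSum :
    (∀ p : Fin 6, Continuous fun l : Fin 6 → ℝ => dihedral l p) ∧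
    (∀ (l : Fin 6 → ℝ) (p : Fin 6), dihedral l p ∈ Set.Icc 0 Real.pi) ∧
    (∀ (l : Fin 6 → ℝ) (i j k h : Fin 4), Distinct4 i j k h →
      dihedral l (edgeOf i j) = dihedral l (edgeOf k h)) ∧
    (∀ (l : Fin 6 → ℝ) (i j k h : Fin 4), Distinct4 i j k h →
      dihedral l (edgeOf i j) + dihedral l (edgeOf i k) + dihedral l (edgeOf i h)
        = Real.pi) := by
  refine ⟨dihedral_continuous, ?_, ?_, ?_⟩
  · intro l p
    unfold dihedral genAngle
    split_ifs
    · exact ⟨Real.pi_pos.le, le_refl _⟩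
    · exact ⟨le_refl _, Real.pi_pos.le⟩
    · exact ⟨Real.arccos_nonneg _, Real.arccos_le_pi _⟩
  · intro l i j k h hd
    have hq : quadIndex (edgeOf i j) = quadIndex (edgeOf k h) := by
      revert hd; revert i j k h; decide
    show genAngle (triSides l) (quadIndex (edgeOf i j)) = _
    rw [hq]; rfl
  · intro l i j k h hd
    have hq : quadIndex (edgeOf i j) ≠ quadIndex (edgeOf i k)
        ∧ quadIndex (edgeOf i j) ≠ quadIndex (edgeOf i h)
        ∧ quadIndex (edgeOf i k) ≠ quadIndex (edgeOf i h) := by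
      revert hd; revert i j k h; decide
    have hsum := genAngle_sum (triSides l) (triSides_pos l)
    have := sum3_perm (genAngle (triSides l)) _ _ _ hq.1 hq.2.1 hq.2.2
    show genAngle (triSides l) (quadIndex (edgeOf i j))
        + genAngle (triSides l) (quadIndex (edgeOf i k))
        + genAngle (triSides l) (quadIndex (edgeOf i h)) = Real.pi
    rw [this, hsum]
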